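/- arXiv:1904.12567 — 2 statements merged into one kernel-verified Lean document; each statement's English description precedes it below -/
import Mathlib

section
/- The distance on the glued space X_Γ is given explicitly by: for x,y ∈ Y = S×[0,l], d([x],[y]) = min over p,q ∈ S of min{d_Y(x,y), d_Y(x,(p,0)) + d_X(γ(p),γ(q)) + d_Y((q,0),y)}; for x ∈ X, y ∈ Y, d([x],[y]) = min over p ∈ S of d_X(x,γ(p)) + d_Y((p,0),y); and for x,y ∈ X, d([x],[y]) = d_X(x,y). -/
open scoped ENNReal
open MeasureTheory Set

noncomputable section

/-- Points of the disjoint union `X ⊔ (S × [0,l])` used to build the glued space `X_Γ`,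
where `S` is the circle of circumference `l` (with its quotient / arc metric). -/
abbrev GluePts (X : Type*) (l : ℝ) := X ⊕ (AddCircle l × Set.Icc (0:ℝ) l)

/-- The Euclidean product distance on the cylinder `S × [0,l]`. -/
def cylDist {l : ℝ} (a b : AddCircle l × Set.Icc (0:ℝ) l) : ℝ :=
  Real.sqrt (dist a.1 b.1 ^ 2 + dist a.2 b.2 ^ 2)

/-- Same, `ℝ≥0∞`-valued. -/
def eCylDist {l : ℝ} (a b : AddCircle l × Set.Icc (0:ℝ) l) : ℝ≥0∞ :=
  ENNReal.ofReal (cylDist a b)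

open Classical in
/-- Cost of a single step of a chain in the disjoint union: within one of the two pieces
one pays its distance; jumping between the pieces is free exactly at identified pairs
`γ(p) ∼ (p,0)` and costs `∞` otherwise. -/
def glueStep {X : Type*} [MetricSpace X] {l : ℝ} (γ : AddCircle l → X) :
    GluePts X l → GluePts X l → ℝ≥0∞
  | Sum.inl x, Sum.inl y => edist x y
  | Sum.inr a, Sum.inr b => eCylDist a b
  | Sum.inl x, Sum.inr b => if x = γ b.1 ∧ (b.2 : ℝ) = 0 then 0 else ∞
  | Sum.inr a, Sum.inl y => if y = γ a.1 ∧ (a.2 : ℝ) = 0 then 0 else ∞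

/-- Total cost of a chain (a list of points of the disjoint union). -/
def chainCost {X : Type*} [MetricSpace X] {l : ℝ} (γ : AddCircle l → X) :
    List (GluePts X l) → ℝ≥0∞
  | [] => 0
  | [_] => 0
  | a :: b :: t => glueStep γ a b + chainCost γ (b :: t)

/-- The quotient (pseudo-)distance of the metric gluing `X_Γ = (X ⊔ S×[0,l]) / (γ(p) ∼ (p,0))`:
the infimum of total costs of finite chains joining the two points. -/
def quotDist {X : Type*} [MetricSpace X] {l : ℝ} (γ : AddCircle l → X)
    (x y : GluePts X l) : ℝ≥0∞ :=
  ⨅ (c : List (GluePts X l)) (_ : c.head? = some x ∧ c.getLast? = some y), chainCost γ c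

/-- `γ : S → X` (with `S` the circle of circumference `l`) is a unit speed curve:
the length of the restriction of (the periodic lift of) `γ` to any interval `[a,b]`
equals `b - a`. This expresses that `γ` is the constant speed parametrization of a
closed rectifiable curve of length `l`. -/
def IsUnitSpeed {X : Type*} [MetricSpace X] {l : ℝ} (γ : AddCircle l → X) : Prop :=
  ∀ a b : ℝ, a ≤ b → eVariationOn (fun t : ℝ => γ t) (Set.Icc a b) = ENNReal.ofReal (b - a)

/-- The canonical retraction `P_Γ : X_Γ → X`: identity on `X` and `(p,t) ↦ γ(p)` on the collar. -/
def glueProj {X : Type*} [MetricSpace X] {l : ℝ} (γ : AddCircle l → X) :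
    GluePts X l → X
  | Sum.inl x => x
  | Sum.inr a => γ a.1

end

noncomputable section AuxGlue

variable {X : Type*} [MetricSpace X] {l : ℝ}

lemma cylDist_nonneg (a b : AddCircle l × Set.Icc (0:ℝ) l) : 0 ≤ cylDist a b :=
  Real.sqrt_nonneg _

lemma cylDist_triangle (a b c : AddCircle l × Set.Icc (0:ℝ) l) :
    cylDist a c ≤ cylDist a b + cylDist b c := by
  have key : ∀ u v w z : ℝ,
      Real.sqrt ((u + w) ^ 2 + (v + z) ^ 2) ≤
        Real.sqrt (u ^ 2 + v ^ 2) + Real.sqrt (w ^ 2 + z ^ 2) := by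
    intro u v w z
    have h := norm_add_le (⟨u, v⟩ : ℂ) ⟨w, z⟩
    simpa [Complex.norm_def, Complex.normSq_apply, Complex.add_re, Complex.add_im, sq] using h
  have h1 : dist a.1 c.1 ≤ dist a.1 b.1 + dist b.1 c.1 := dist_triangle _ _ _
  have h2 : dist a.2 c.2 ≤ dist a.2 b.2 + dist b.2 c.2 := dist_triangle _ _ _
  calc cylDist a c
      ≤ Real.sqrt ((dist a.1 b.1 + dist b.1 c.1) ^ 2 + (dist a.2 b.2 + dist b.2 c.2) ^ 2) := by
        apply Real.sqrt_le_sqrt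
        gcongr
    _ ≤ _ := key _ _ _ _

lemma eCylDist_triangle (a b c : AddCircle l × Set.Icc (0:ℝ) l) :
    eCylDist a c ≤ eCylDist a b + eCylDist b c := by
  rw [eCylDist, eCylDist, eCylDist,
    ← ENNReal.ofReal_add (cylDist_nonneg a b) (cylDist_nonneg b c)]
  exact ENNReal.ofReal_le_ofReal (cylDist_triangle a b c)

lemma eCylDist_self (a : AddCircle l × Set.Icc (0:ℝ) l) : eCylDist a a = 0 := by
  simp [eCylDist, cylDist]

lemma eCylDist_zero (p q : AddCircle l) (s t : Set.Icc (0:ℝ) l)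
    (hs : (s : ℝ) = 0) (ht : (t : ℝ) = 0) : eCylDist (p, s) (q, t) = edist p q := by
  have hst : dist s t = 0 := by
    rw [Subtype.dist_eq, hs, ht]; simp
  simp only [eCylDist, cylDist, hst]
  rw [show dist p q ^ 2 + (0:ℝ) ^ 2 = dist p q ^ 2 by ring,
    Real.sqrt_sq dist_nonneg, edist_dist]

variable (hl : 0 < l) (γ : AddCircle l → X)

/-- The candidate explicit formula for the glued distance. -/
def Dglue : GluePts X l → GluePts X l → ℝ≥0∞
  | Sum.inl x, Sum.inl y => edist x y
  | Sum.inl x, Sum.inr b =>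
      ⨅ p : AddCircle l, edist x (γ p) + eCylDist (p, ⟨0, ⟨le_rfl, hl.le⟩⟩) b
  | Sum.inr a, Sum.inl y =>
      ⨅ p : AddCircle l, eCylDist a (p, ⟨0, ⟨le_rfl, hl.le⟩⟩) + edist (γ p) y
  | Sum.inr a, Sum.inr b =>
      min (eCylDist a b)
        (⨅ (p : AddCircle l) (q : AddCircle l),
          eCylDist a (p, ⟨0, ⟨le_rfl, hl.le⟩⟩) + edist (γ p) (γ q) +
            eCylDist (q, ⟨0, ⟨le_rfl, hl.le⟩⟩) b)

lemma Dglue_self (a : GluePts X l) : Dglue hl γ a a = 0 := by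
  cases a with
  | inl x => simp [Dglue]
  | inr a =>
      refine le_antisymm ?_ zero_le
      exact (min_le_left _ _).trans_eq (eCylDist_self a)

variable (hγLip : LipschitzWith 1 γ)

include hγLip in
lemma lip_edist (p q : AddCircle l) : edist (γ p) (γ q) ≤ edist p q := by
  simpa using hγLip p q

set_option maxHeartbeats 1000000 in
include hγLip in
/-- The key step: `Dglue` drops by at most the step cost along a chain. -/
lemma Dglue_step (a b c : GluePts X l) :
    Dglue hl γ a c ≤ glueStep γ a b + Dglue hl γ b c := by
  classical
  set z0 : Set.Icc (0:ℝ) l := ⟨0, ⟨le_rfl, hl.le⟩⟩ with hz0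
  have hz0' : (z0 : ℝ) = 0 := rfl
  obtain x | x := a <;> obtain y | y := b <;> obtain z | z := c
  · -- inl inl inl
    exact edist_triangle x y z
  · -- inl inl inr
    show (⨅ p, edist x (γ p) + eCylDist (p, z0) z) ≤
      edist x y + ⨅ p, edist y (γ p) + eCylDist (p, z0) z
    rw [ENNReal.add_iInf]
    refine le_iInf fun p => iInf_le_of_le p ?_
    rw [← add_assoc]
    exact add_le_add_left (edist_triangle _ _ _) _
  · -- inl inr inl
    show edist x z ≤ glueStep γ (Sum.inl x) (Sum.inr y) + _
    by_cases h : x = γ y.1 ∧ (y.2 : ℝ) = 0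
    · obtain ⟨y1, y2⟩ := y
      obtain ⟨hx, hy2⟩ := h
      have hy2' : y2 = z0 := Subtype.ext hy2
      subst hy2' hx
      simp only [glueStep, eq_self_iff_true, hz0', and_self, if_true, zero_add]
      refine le_iInf fun p => ?_
      calc edist (γ y1) z ≤ edist (γ y1) (γ p) + edist (γ p) z := edist_triangle _ _ _
        _ ≤ edist y1 p + edist (γ p) z := add_le_add_left (lip_edist γ hγLip _ _) _
        _ = eCylDist (y1, z0) (p, z0) + edist (γ p) z := by
            rw [eCylDist_zero _ _ _ _ rfl rfl]
    · simp only [glueStep, if_neg h, top_add]; exact le_top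
  · -- inl inr inr
    show (⨅ p, edist x (γ p) + eCylDist (p, z0) z) ≤
      glueStep γ (Sum.inl x) (Sum.inr y) + _
    by_cases h : x = γ y.1 ∧ (y.2 : ℝ) = 0
    · obtain ⟨y1, y2⟩ := y
      obtain ⟨hx, hy2⟩ := h
      have hy2' : y2 = z0 := Subtype.ext hy2
      subst hy2' hx
      simp only [glueStep, eq_self_iff_true, hz0', and_self, if_true, zero_add]
      refine le_min ?_ ?_
      · refine iInf_le_of_le y1 ?_
        simp [edist_self]
      · refine le_iInf fun p => le_iInf fun q => iInf_le_of_le q ?_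
        have h1 : edist (γ y1) (γ q) ≤
            eCylDist (y1, z0) (p, z0) + edist (γ p) (γ q) := by
          rw [eCylDist_zero _ _ _ _ rfl rfl]
          calc edist (γ y1) (γ q) ≤ edist (γ y1) (γ p) + edist (γ p) (γ q) :=
                edist_triangle _ _ _
            _ ≤ _ := add_le_add_left (lip_edist γ hγLip _ _) _
        exact add_le_add_left h1 _
    · simp only [glueStep, if_neg h, top_add]; exact le_top
  · -- inr inl inl
    show (⨅ p, eCylDist x (p, z0) + edist (γ p) z) ≤
      glueStep γ (Sum.inr x) (Sum.inl y) + edist y z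
    by_cases h : y = γ x.1 ∧ (x.2 : ℝ) = 0
    · obtain ⟨x1, x2⟩ := x
      obtain ⟨hy, hx2⟩ := h
      have hx2' : x2 = z0 := Subtype.ext hx2
      subst hx2' hy
      simp only [glueStep, eq_self_iff_true, hz0', and_self, if_true, zero_add]
      refine iInf_le_of_le x1 ?_
      rw [eCylDist_self, zero_add]
    · simp only [glueStep, if_neg h, top_add]; exact le_top
  · -- inr inl inr
    show Dglue hl γ (Sum.inr x) (Sum.inr z) ≤
      glueStep γ (Sum.inr x) (Sum.inl y) + ⨅ q, edist y (γ q) + eCylDist (q, z0) z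
    by_cases h : y = γ x.1 ∧ (x.2 : ℝ) = 0
    · obtain ⟨x1, x2⟩ := x
      obtain ⟨hy, hx2⟩ := h
      have hx2' : x2 = z0 := Subtype.ext hx2
      subst hx2' hy
      simp only [glueStep, eq_self_iff_true, hz0', and_self, if_true, zero_add]
      refine le_iInf fun q => ?_
      refine (min_le_right _ _).trans ?_
      refine (iInf_le_of_le x1 (iInf_le_of_le q ?_))
      rw [eCylDist_self, zero_add]
    · simp only [glueStep, if_neg h, top_add]; exact le_top
  · -- inr inr inl
    show (⨅ p, eCylDist x (p, z0) + edist (γ p) z) ≤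
      eCylDist x y + ⨅ p, eCylDist y (p, z0) + edist (γ p) z
    rw [ENNReal.add_iInf]
    refine le_iInf fun p => iInf_le_of_le p ?_
    rw [← add_assoc]
    exact add_le_add_left (eCylDist_triangle _ _ _) _
  · -- inr inr inr
    show Dglue hl γ (Sum.inr x) (Sum.inr z) ≤
      eCylDist x y + Dglue hl γ (Sum.inr y) (Sum.inr z)
    show min _ _ ≤ eCylDist x y + min (eCylDist y z) _
    rw [← min_add_add_left]
    refine le_min ?_ ?_
    · exact (min_le_left _ _).trans (eCylDist_triangle _ _ _)
    · rw [ENNReal.add_iInf]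
      refine le_iInf fun p => ?_
      rw [ENNReal.add_iInf]
      refine le_iInf fun q => ?_
      refine (min_le_right _ _).trans (iInf_le_of_le p (iInf_le_of_le q ?_))
      calc eCylDist x (p, z0) + edist (γ p) (γ q) + eCylDist (q, z0) z
          ≤ (eCylDist x y + eCylDist y (p, z0)) + edist (γ p) (γ q) + eCylDist (q, z0) z := by
            gcongr
            exact eCylDist_triangle _ _ _
        _ = eCylDist x y + (eCylDist y (p, z0) + edist (γ p) (γ q) + eCylDist (q, z0) z) := by
            ring

include hγLip in
lemma chainCost_lower :
    ∀ (c : List (GluePts X l)) (x y : GluePts X l),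
      c.head? = some x → c.getLast? = some y → Dglue hl γ x y ≤ chainCost γ c
  | [], x, y => by simp
  | [a], x, y => by
      intro h1 h2
      simp only [List.head?_cons, List.getLast?_singleton, Option.some_inj] at h1 h2
      subst h1; subst h2
      simp [chainCost, Dglue_self]
  | a :: b :: t, x, y => by
      intro h1 h2
      have hxa : a = x := by simpa using h1
      subst hxa
      have h2' : (b :: t).getLast? = some y := by
        rwa [List.getLast?_cons_cons] at h2
      calc Dglue hl γ a y ≤ glueStep γ a b + Dglue hl γ b y :=
            Dglue_step hl γ hγLip a b y
        _ ≤ glueStep γ a b + chainCost γ (b :: t) :=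
            add_le_add_right (chainCost_lower (b :: t) b y rfl h2') _
        _ = chainCost γ (a :: b :: t) := rfl

lemma quotDist_le_chain (c : List (GluePts X l)) (x y : GluePts X l)
    (h1 : c.head? = some x) (h2 : c.getLast? = some y) :
    quotDist γ x y ≤ chainCost γ c :=
  iInf₂_le c ⟨h1, h2⟩

include hγLip in
lemma quotDist_eq_Dglue (x y : GluePts X l) :
    quotDist γ x y = Dglue hl γ x y := by
  classical
  set z0 : Set.Icc (0:ℝ) l := ⟨0, ⟨le_rfl, hl.le⟩⟩ with hz0
  refine le_antisymm ?_ (le_iInf fun c => le_iInf fun hc =>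
    chainCost_lower hl γ hγLip c x y hc.1 hc.2)
  obtain a | a := x <;> obtain b | b := y
  · -- inl inl
    refine (quotDist_le_chain γ [Sum.inl a, Sum.inl b] _ _ rfl rfl).trans ?_
    simp [chainCost, glueStep, Dglue]
  · -- inl inr
    show _ ≤ ⨅ p, edist a (γ p) + eCylDist (p, z0) b
    refine le_iInf fun p => ?_
    refine (quotDist_le_chain γ
      [Sum.inl a, Sum.inl (γ p), Sum.inr (p, z0), Sum.inr b] _ _ rfl rfl).trans ?_
    simp only [chainCost, glueStep]
    simp only [eq_self_iff_true, and_self, if_true, show (z0 : ℝ) = 0 from rfl]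
    simp [add_assoc]
  · -- inr inl
    show _ ≤ ⨅ p, eCylDist a (p, z0) + edist (γ p) b
    refine le_iInf fun p => ?_
    refine (quotDist_le_chain γ
      [Sum.inr a, Sum.inr (p, z0), Sum.inl (γ p), Sum.inl b] _ _ rfl rfl).trans ?_
    simp only [chainCost, glueStep]
    simp only [eq_self_iff_true, and_self, if_true, show (z0 : ℝ) = 0 from rfl]
    simp [add_assoc]
  · -- inr inr
    refine le_min ?_ ?_
    · refine (quotDist_le_chain γ [Sum.inr a, Sum.inr b] _ _ rfl rfl).trans ?_
      simp [chainCost, glueStep]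
    · refine le_iInf fun p => le_iInf fun q => ?_
      refine (quotDist_le_chain γ
        [Sum.inr a, Sum.inr (p, z0), Sum.inl (γ p), Sum.inl (γ q),
          Sum.inr (q, z0), Sum.inr b] _ _ rfl rfl).trans ?_
      simp only [chainCost, glueStep]
      simp only [eq_self_iff_true, and_self, if_true, show (z0 : ℝ) = 0 from rfl]
      simp only [add_zero, zero_add]
      rw [add_assoc]

end AuxGlue

/-- The quotient distance of the glued space `X_Γ` is given by the
explicit formula: for `x,y` in the cylinder `Y = S×[0,l]` it is the minimum of the
cylinder distance and of the infimum over `p,q ∈ S` of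
`d_Y(x,(p,0)) + d_X(γ(p),γ(q)) + d_Y((q,0),y)`; for `x ∈ X`, `y ∈ Y` it is the infimum
over `p ∈ S` of `d_X(x,γ(p)) + d_Y((p,0),y)`; and on `X × X` it is the distance of `X`. -/
theorem quotDist_eq_glue_formula
    (X : Type*) [MetricSpace X] [CompleteSpace X] (l : ℝ) (hl : 0 < l)
    (γ : AddCircle l → X) (hγLip : LipschitzWith 1 γ) (hγspeed : IsUnitSpeed γ) :
    (∀ x y : AddCircle l × Set.Icc (0:ℝ) l,
        quotDist γ (Sum.inr x) (Sum.inr y) =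
          min (eCylDist x y)
            (⨅ (p : AddCircle l) (q : AddCircle l),
              eCylDist x (p, ⟨0, ⟨le_rfl, hl.le⟩⟩) + edist (γ p) (γ q) +
                eCylDist (q, ⟨0, ⟨le_rfl, hl.le⟩⟩) y)) ∧
    (∀ (x : X) (y : AddCircle l × Set.Icc (0:ℝ) l),
        quotDist γ (Sum.inl x) (Sum.inr y) =
          ⨅ p : AddCircle l, edist x (γ p) + eCylDist (p, ⟨0, ⟨le_rfl, hl.le⟩⟩) y) ∧
    (∀ x y : X, quotDist γ (Sum.inl x) (Sum.inl y) = edist x y) := by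
  refine ⟨fun x y => ?_, fun x y => ?_, fun x y => ?_⟩ <;>
    rw [quotDist_eq_Dglue hl γ hγLip] <;> rfl
end

section
/- If X is a proper metric space, then the glued space X_Γ is proper. -/
open scoped ENNReal
open MeasureTheory Set

section Aux

variable {X : Type*} [MetricSpace X] {l : ℝ}

lemma step_proj (γ : AddCircle l → X) (hγ : LipschitzWith 1 γ) (a b : GluePts X l) :
    edist (glueProj γ a) (glueProj γ b) ≤ glueStep γ a b := by
  cases a with
  | inl x =>
    cases b with
    | inl y => simp [glueProj, glueStep]
    | inr b =>
      simp only [glueProj, glueStep]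
      split
      · next h => simp [h.1]
      · exact le_top
  | inr a =>
    cases b with
    | inl y =>
      simp only [glueProj, glueStep]
      split
      · next h => simp [h.1]
      · exact le_top
    | inr b =>
      simp only [glueProj, glueStep]
      calc edist (γ a.1) (γ b.1) ≤ 1 * edist a.1 b.1 := hγ.edist_le_mul _ _
        _ = ENNReal.ofReal (dist a.1 b.1) := by rw [one_mul, edist_dist]
        _ ≤ eCylDist a b := by
            apply ENNReal.ofReal_le_ofReal
            have : dist a.1 b.1 = Real.sqrt (dist a.1 b.1 ^ 2) := by
              rw [Real.sqrt_sq dist_nonneg]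
            rw [this]
            exact Real.sqrt_le_sqrt (le_add_of_nonneg_right (sq_nonneg _))

lemma chain_proj (γ : AddCircle l → X) (hγ : LipschitzWith 1 γ) :
    ∀ (c : List (GluePts X l)) (x y : GluePts X l), c.head? = some x → c.getLast? = some y →
      edist (glueProj γ x) (glueProj γ y) ≤ chainCost γ c
  | [], x, y, hx, hy => by simp at hx
  | [a], x, y, hx, hy => by
      simp only [List.head?, List.getLast?, Option.some.injEq] at hx hy
      subst hx; subst hy; simp
  | a :: b :: t, x, y, hx, hy => by
      have hax : a = x := by simpa using hx
      subst hax
      rw [List.getLast?_cons_cons] at hy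
      calc edist (glueProj γ a) (glueProj γ y)
          ≤ edist (glueProj γ a) (glueProj γ b) + edist (glueProj γ b) (glueProj γ y) :=
            edist_triangle _ _ _
        _ ≤ glueStep γ a b + chainCost γ (b :: t) :=
            add_le_add (step_proj γ hγ a b) (chain_proj γ hγ (b :: t) b y rfl hy)
        _ = chainCost γ (a :: b :: t) := rfl

lemma proj_le_quotDist (γ : AddCircle l → X) (hγ : LipschitzWith 1 γ) (x y : GluePts X l) :
    edist (glueProj γ x) (glueProj γ y) ≤ quotDist γ x y :=
  le_iInf fun c => le_iInf fun h => chain_proj γ hγ c x y h.1 h.2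

lemma quotDist_le_step (γ : AddCircle l → X) (x y : GluePts X l) :
    quotDist γ x y ≤ glueStep γ x y := by
  have h : quotDist γ x y ≤ chainCost γ [x, y] :=
    iInf_le_of_le [x, y] (iInf_le_of_le ⟨rfl, rfl⟩ le_rfl)
  simpa [chainCost] using h

end Aux

/-- If `X` is a proper metric space, then the glued space `X_Γ` is
proper: every sequence which is bounded with respect to the quotient distance has a
subsequence converging (in the quotient distance) to some point. (For metric spaces
this is equivalent to closed bounded sets being compact.) -/
theorem glued_space_proper
    (X : Type*) [MetricSpace X] [ProperSpace X] (l : ℝ) (hl : 0 < l)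
    (γ : AddCircle l → X) (hγLip : LipschitzWith 1 γ) (hγspeed : IsUnitSpeed γ) :
    ∀ (u : ℕ → GluePts X l) (x₀ : GluePts X l) (R : ℝ≥0∞), R ≠ ∞ →
      (∀ n, quotDist γ (u n) x₀ ≤ R) →
      ∃ (x : GluePts X l) (φ : ℕ → ℕ), StrictMono φ ∧
        Filter.Tendsto (fun n => quotDist γ (u (φ n)) x) Filter.atTop (nhds 0) := by
  intro u x₀ R hR hbound
  haveI : Fact (0 < l) := ⟨hl⟩
  classical
  set p : ℕ → Prop := fun n => ∃ x, u n = Sum.inl x with hp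
  by_cases hinf : {n | p n}.Infinite
  · -- infinitely many terms in X
    set w : ℕ → X := fun n => glueProj γ (u (Nat.nth p n)) with hw
    have hmemp : ∀ n, p (Nat.nth p n) := fun n => Nat.nth_mem_of_infinite hinf n
    have huw : ∀ n, u (Nat.nth p n) = Sum.inl (w n) := by
      intro n
      obtain ⟨x, hx⟩ := hmemp n
      simp [hw, hx, glueProj]
    have hball : ∀ n, w n ∈ Metric.closedBall (glueProj γ x₀) R.toReal := by
      intro n
      have h1 : edist (w n) (glueProj γ x₀) ≤ R := by
        calc edist (w n) (glueProj γ x₀)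
            = edist (glueProj γ (u (Nat.nth p n))) (glueProj γ x₀) := by rw [hw]
          _ ≤ quotDist γ (u (Nat.nth p n)) x₀ := proj_le_quotDist γ hγLip _ _
          _ ≤ R := hbound _
      have h2 : dist (w n) (glueProj γ x₀) ≤ R.toReal := by
        rw [dist_edist]
        exact ENNReal.toReal_mono hR h1
      simpa [Metric.mem_closedBall] using h2
    obtain ⟨x, -, ψ, hψ, hconv⟩ :=
      (isCompact_closedBall (glueProj γ x₀) R.toReal).tendsto_subseq hball
    refine ⟨Sum.inl x, Nat.nth p ∘ ψ, (Nat.nth_strictMono hinf).comp hψ, ?_⟩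
    have hle : ∀ n, quotDist γ (u ((Nat.nth p ∘ ψ) n)) (Sum.inl x) ≤
        ENNReal.ofReal (dist (w (ψ n)) x) := by
      intro n
      have := quotDist_le_step γ (Sum.inl (w (ψ n))) (Sum.inl x)
      simp only [Function.comp_apply, huw (ψ n)]
      calc quotDist γ (Sum.inl (w (ψ n))) (Sum.inl x) ≤ glueStep γ (Sum.inl (w (ψ n))) (Sum.inl x) := this
        _ = ENNReal.ofReal (dist (w (ψ n)) x) := by simp [glueStep, edist_dist]
    have hdist : Filter.Tendsto (fun n => dist (w (ψ n)) x) Filter.atTop (nhds 0) :=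
      tendsto_iff_dist_tendsto_zero.mp hconv
    have hof : Filter.Tendsto (fun n => ENNReal.ofReal (dist (w (ψ n)) x))
        Filter.atTop (nhds 0) := by
      have := ENNReal.tendsto_ofReal hdist
      simpa using this
    exact tendsto_of_tendsto_of_tendsto_of_le_of_le tendsto_const_nhds hof
      (fun n => zero_le) hle
  · -- infinitely many terms in the cylinder
    have hq : {n | ∃ a, u n = Sum.inr a}.Infinite := by
      rw [Set.not_infinite] at hinf
      refine (hinf.infinite_compl).mono ?_
      intro n hn
      simp only [Set.mem_compl_iff, Set.mem_setOf_eq, hp] at hn ⊢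
      cases h : u n with
      | inl x => exact absurd ⟨x, h⟩ hn
      | inr a => exact ⟨a, rfl⟩
    set q : ℕ → Prop := fun n => ∃ a, u n = Sum.inr a with hqdef
    have hqinf : {n | q n}.Infinite := hq
    haveI : Inhabited (AddCircle l × Set.Icc (0:ℝ) l) :=
      ⟨(0, ⟨0, by simp [hl.le]⟩)⟩
    set v : ℕ → AddCircle l × Set.Icc (0:ℝ) l :=
      fun n => Sum.elim (fun _ => default) id (u (Nat.nth q n)) with hv
    have hmemq : ∀ n, q (Nat.nth q n) := fun n => Nat.nth_mem_of_infinite hqinf n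
    have huv : ∀ n, u (Nat.nth q n) = Sum.inr (v n) := by
      intro n
      obtain ⟨a, ha⟩ := hmemq n
      simp [hv, ha]
    obtain ⟨a, -, ψ, hψ, hconv⟩ := isCompact_univ.tendsto_subseq (fun n => Set.mem_univ (v n))
    refine ⟨Sum.inr a, Nat.nth q ∘ ψ, (Nat.nth_strictMono hqinf).comp hψ, ?_⟩
    have hle : ∀ n, quotDist γ (u ((Nat.nth q ∘ ψ) n)) (Sum.inr a) ≤
        eCylDist (v (ψ n)) a := by
      intro n
      simp only [Function.comp_apply, huv (ψ n)]
      exact quotDist_le_step γ (Sum.inr (v (ψ n))) (Sum.inr a)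
    have hfst : Filter.Tendsto (fun n => dist (v (ψ n)).1 a.1) Filter.atTop (nhds 0) :=
      tendsto_iff_dist_tendsto_zero.mp ((continuous_fst.tendsto a).comp hconv)
    have hsnd : Filter.Tendsto (fun n => dist (v (ψ n)).2 a.2) Filter.atTop (nhds 0) :=
      tendsto_iff_dist_tendsto_zero.mp ((continuous_snd.tendsto a).comp hconv)
    have hcyl : Filter.Tendsto (fun n => cylDist (v (ψ n)) a) Filter.atTop (nhds 0) := by
      have hsum : Filter.Tendsto
          (fun n => dist (v (ψ n)).1 a.1 ^ 2 + dist (v (ψ n)).2 a.2 ^ 2)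
          Filter.atTop (nhds 0) := by
        have := (hfst.pow 2).add (hsnd.pow 2)
        simpa using this
      have := (Real.continuous_sqrt.tendsto 0).comp hsum
      simpa [cylDist, Function.comp_def] using this
    have hof : Filter.Tendsto (fun n => eCylDist (v (ψ n)) a) Filter.atTop (nhds 0) := by
      have := ENNReal.tendsto_ofReal hcyl
      simpa [eCylDist, Function.comp] using this
    exact tendsto_of_tendsto_of_tendsto_of_le_of_le tendsto_const_nhds hof
      (fun n => zero_le) hle
end
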